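/- (Stiff-fluid Tolman orbit.) For the stiff-fluid choice f(Ω) ≡ 1, Υ(Ω) = Ω, σ(Ω) = Ω (corresponding to the equation of state kρc² = 1 + kp with ω = kp), the curve γ(Ω) = (3/(5+Ω), (2+Ω)/(2+3Ω+4Ω²), Ω), Ω ∈ (0,1), is an orbit of the dynamical system: at every point of the curve the vector field F is tangent to the curve, i.e., F(γ(Ω)) is a scalar multiple of γ′(Ω) for every Ω ∈ (0,1). -/

import Mathlib

open Set

/-- `H(U,V,Ω) = (1+σ(Ω))V(1−U+σ(Ω)U)` for the stiff-fluid choice `σ(Ω) = Ω`. -/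
noncomputable def HfunStiff (U V W : ℝ) : ℝ :=
  (1 + W) * V * (1 - U + W * U)

/-- The vector field `F` on the cube for the stiff-fluid choice
`f(Ω) ≡ 1`, `Υ(Ω) = Ω`, `σ(Ω) = Ω`. -/
noncomputable def FfieldStiff (U V W : ℝ) : ℝ × ℝ × ℝ :=
  (U * (1 - U) * ((1 - V) * (3 - 4 * U) - W * HfunStiff U V W),
   V * (1 - V) * ((2 * U - 1) * (1 - V + 2 * W * V) + (1 - W) * HfunStiff U V W),
   -(1 : ℝ) * W * (1 - W) * HfunStiff U V W)

/-- The Tolman curve `γ(Ω) = (3/(5+Ω), (2+Ω)/(2+3Ω+4Ω²), Ω)`. -/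
noncomputable def tolmanCurve (W : ℝ) : ℝ × ℝ × ℝ :=
  (3 / (5 + W), (2 + W) / (2 + 3 * W + 4 * W ^ 2), W)

/-- For the stiff-fluid system the Tolman curve is an orbit:
at every point of the curve the vector field is a scalar multiple of the
tangent vector of the curve. -/
theorem stmt19 :
    ∀ W ∈ Ioo (0:ℝ) 1,
      ∃ d : ℝ × ℝ × ℝ, ∃ κ : ℝ,
        HasDerivAt tolmanCurve d W ∧
        FfieldStiff (tolmanCurve W).1 (tolmanCurve W).2.1 (tolmanCurve W).2.2 = κ • d := by

  intro W hW
  obtain ⟨hW0, hW1⟩ := hW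
  have h5 : (5 : ℝ) + W ≠ 0 := by nlinarith
  have hq : (2 : ℝ) + 3 * W + 4 * W ^ 2 ≠ 0 := by nlinarith
  -- derivative of first component
  have hd1 : HasDerivAt (fun W : ℝ => 3 / (5 + W))
      ((0 * (5 + W) - 3 * 1) / (5 + W) ^ 2) W := by
    have h5d : HasDerivAt (fun W : ℝ => 5 + W) 1 W := by
      exact (hasDerivAt_id W).const_add (5:ℝ)
    exact (hasDerivAt_const W (3:ℝ)).div h5d h5
  have hd2 : HasDerivAt (fun W : ℝ => (2 + W) / (2 + 3 * W + 4 * W ^ 2))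
      ((1 * (2 + 3 * W + 4 * W ^ 2) - (2 + W) * (3 + 4 * (2 * W))) /
        (2 + 3 * W + 4 * W ^ 2) ^ 2) W := by
    have hnum : HasDerivAt (fun W : ℝ => 2 + W) 1 W := by
      exact (hasDerivAt_id W).const_add (2:ℝ)
    have hden : HasDerivAt (fun W : ℝ => 2 + 3 * W + 4 * W ^ 2) (3 + 4 * (2 * W)) W := by
      have h1 : HasDerivAt (fun W : ℝ => 2 + 3 * W) 3 W := by
        exact (((hasDerivAt_id W).const_mul (3:ℝ)).const_add (2:ℝ)).congr_deriv (by ring)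
      have h2 : HasDerivAt (fun W : ℝ => 4 * W ^ 2) (4 * (2 * W)) W := by
        simpa using (hasDerivAt_pow 2 W).const_mul (4:ℝ)
      exact h1.add h2
    exact hnum.div hden hq
  have hd3 : HasDerivAt (fun W : ℝ => W) 1 W := hasDerivAt_id W
  refine ⟨((0 * (5 + W) - 3 * 1) / (5 + W) ^ 2,
    (1 * (2 + 3 * W + 4 * W ^ 2) - (2 + W) * (3 + 4 * (2 * W))) / (2 + 3 * W + 4 * W ^ 2) ^ 2,
    1),
    -(1 : ℝ) * W * (1 - W) *
      HfunStiff (3 / (5 + W)) ((2 + W) / (2 + 3 * W + 4 * W ^ 2)) W, ?_, ?_⟩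
  · exact hd1.prodMk (hd2.prodMk hd3)
  · simp only [tolmanCurve, FfieldStiff, HfunStiff, Prod.smul_mk, smul_eq_mul, Prod.mk.injEq]
    refine ⟨?_, ?_, ?_⟩ <;> field_simp <;> ring
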